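/- arXiv:2005.02484 — 3 statements merged into one kernel-verified Lean document; each statement's English description precedes it below -/
import Mathlib

section
/- Let (X,T) be a TDS. The Feldman–Katok function ρ_FK is a pseudometric on X: for all x,y,z ∈ X one has ρ_FK(x,x) = 0, ρ_FK(x,y) = ρ_FK(y,x), and ρ_FK(x,z) ≤ ρ_FK(x,y) + ρ_FK(y,z). -/
open Filter Topology MeasureTheory Set

namespace FKPaper

variable {X : Type*} [MetricSpace X]

/-- The maximal fit of an `(n,δ)`-match between the orbits of `x` and `z` under `T`:
the largest cardinality of the domain of an order-preserving bijection
`π : D → R`, with `D, R ⊆ {0,…,n-1}` and `dist (T^[i] x) (T^[π i] z) < δ` for `i ∈ D`. -/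
noncomputable def maxFit (T : X → X) (δ : ℝ) (n : ℕ) (x z : X) : ℕ :=
  sSup {k : ℕ | ∃ i j : Fin k → ℕ, StrictMono i ∧ StrictMono j ∧
    (∀ s, i s < n) ∧ (∀ s, j s < n) ∧ ∀ s, dist (T^[i s] x) (T^[j s] z) < δ}

/-- `f̄_{n,δ}(x,z) = 1 - (maximal fit of an (n,δ)-match of x and z)/n`. -/
noncomputable def fbarN (T : X → X) (δ : ℝ) (n : ℕ) (x z : X) : ℝ :=
  1 - (maxFit T δ n x z : ℝ) / n

/-- `f̄_δ(x,z) = limsup_{n→∞} f̄_{n,δ}(x,z)`. -/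
noncomputable def fbar (T : X → X) (δ : ℝ) (x z : X) : ℝ :=
  Filter.limsup (fun n => fbarN T δ n x z) Filter.atTop

/-- The Feldman–Katok pseudometric `ρ_FK(x,z) = inf {δ > 0 : f̄_δ(x,z) < δ}`. -/
noncomputable def rhoFK (T : X → X) (x z : X) : ℝ :=
  sInf {δ : ℝ | 0 < δ ∧ fbar T δ x z < δ}

end FKPaper

namespace FKAux
open FKPaper

variable {X : Type*} [MetricSpace X]

def fitSet (T : X → X) (δ : ℝ) (n : ℕ) (x z : X) : Set ℕ :=
  {k : ℕ | ∃ i j : Fin k → ℕ, StrictMono i ∧ StrictMono j ∧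
    (∀ s, i s < n) ∧ (∀ s, j s < n) ∧ ∀ s, dist (T^[i s] x) (T^[j s] z) < δ}

lemma maxFit_def (T : X → X) (δ : ℝ) (n : ℕ) (x z : X) :
    maxFit T δ n x z = sSup (fitSet T δ n x z) := rfl

lemma zero_mem_fitSet (T : X → X) (δ : ℝ) (n : ℕ) (x z : X) :
    0 ∈ fitSet T δ n x z :=
  ⟨Fin.elim0, Fin.elim0, fun s => s.elim0, fun s => s.elim0,
    fun s => s.elim0, fun s => s.elim0, fun s => s.elim0⟩

lemma le_of_mem_fitSet {T : X → X} {δ : ℝ} {n : ℕ} {x z : X} {k : ℕ}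
    (hk : k ∈ fitSet T δ n x z) : k ≤ n := by
  classical
  obtain ⟨i, _, hi, _, hin, _, _⟩ := hk
  have h1 : (Finset.univ.image i).card = k := by
    rw [Finset.card_image_of_injective _ hi.injective, Finset.card_univ, Fintype.card_fin]
  have h2 : Finset.univ.image i ⊆ Finset.range n := by
    intro m hm
    obtain ⟨s, _, rfl⟩ := Finset.mem_image.mp hm
    exact Finset.mem_range.mpr (hin s)
  calc k = (Finset.univ.image i).card := h1.symm
    _ ≤ (Finset.range n).card := Finset.card_le_card h2
    _ = n := Finset.card_range n

lemma fitSet_bddAbove (T : X → X) (δ : ℝ) (n : ℕ) (x z : X) :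
    BddAbove (fitSet T δ n x z) :=
  ⟨n, fun _ hk => le_of_mem_fitSet hk⟩

lemma maxFit_le (T : X → X) (δ : ℝ) (n : ℕ) (x z : X) : maxFit T δ n x z ≤ n :=
  csSup_le ⟨0, zero_mem_fitSet T δ n x z⟩ fun _ hk => le_of_mem_fitSet hk

lemma le_maxFit {T : X → X} {δ : ℝ} {n : ℕ} {x z : X} {k : ℕ}
    (hk : k ∈ fitSet T δ n x z) : k ≤ maxFit T δ n x z :=
  le_csSup (fitSet_bddAbove T δ n x z) hk

lemma maxFit_mem (T : X → X) (δ : ℝ) (n : ℕ) (x z : X) :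
    maxFit T δ n x z ∈ fitSet T δ n x z :=
  Nat.sSup_mem ⟨0, zero_mem_fitSet T δ n x z⟩ (fitSet_bddAbove T δ n x z)

lemma fitSet_symm (T : X → X) (δ : ℝ) (n : ℕ) (x z : X) :
    fitSet T δ n x z = fitSet T δ n z x := by
  have key : ∀ a b : X, fitSet T δ n a b ⊆ fitSet T δ n b a := by
    rintro a b k ⟨i, j, hi, hj, hin, hjn, hd⟩
    exact ⟨j, i, hj, hi, hjn, hin, fun s => by rw [dist_comm]; exact hd s⟩
  exact le_antisymm (key x z) (key z x)

lemma maxFit_symm (T : X → X) (δ : ℝ) (n : ℕ) (x z : X) :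
    maxFit T δ n x z = maxFit T δ n z x := by
  rw [maxFit_def, maxFit_def, fitSet_symm]

lemma maxFit_self {T : X → X} {δ : ℝ} (hδ : 0 < δ) (n : ℕ) (x : X) :
    maxFit T δ n x x = n := by
  refine le_antisymm (maxFit_le T δ n x x) (le_maxFit ?_)
  exact ⟨Fin.val, Fin.val, Fin.val_strictMono, Fin.val_strictMono,
    fun s => s.2, fun s => s.2, fun s => by rw [dist_self]; exact hδ⟩

lemma fitSet_compose {T : X → X} {δ₁ δ₂ : ℝ} {n : ℕ} {x y z : X} {k₁ k₂ : ℕ}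
    (h₁ : k₁ ∈ fitSet T δ₁ n x y) (h₂ : k₂ ∈ fitSet T δ₂ n y z) :
    ∃ k ∈ fitSet T (δ₁ + δ₂) n x z, k₁ + k₂ ≤ n + k := by
  classical
  obtain ⟨i₁, j₁, hi₁, hj₁, hi₁n, hj₁n, hd₁⟩ := h₁
  obtain ⟨i₂, j₂, hi₂, hj₂, hi₂n, hj₂n, hd₂⟩ := h₂
  set A : Finset ℕ := Finset.univ.image j₁ with hA
  set B : Finset ℕ := Finset.univ.image i₂ with hB
  set E : Finset ℕ := A ∩ B with hE
  set k := E.card with hk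
  let φ := E.orderIsoOfFin rfl
  have hφA : ∀ s : Fin k, (φ s : ℕ) ∈ A := fun s => (Finset.mem_inter.mp (φ s).2).1
  have hφB : ∀ s : Fin k, (φ s : ℕ) ∈ B := fun s => (Finset.mem_inter.mp (φ s).2).2
  have hexA : ∀ s : Fin k, ∃ a : Fin k₁, j₁ a = (φ s : ℕ) := by
    intro s
    obtain ⟨a, _, ha⟩ := Finset.mem_image.mp (hφA s)
    exact ⟨a, ha⟩
  have hexB : ∀ s : Fin k, ∃ b : Fin k₂, i₂ b = (φ s : ℕ) := by
    intro s
    obtain ⟨b, _, hb⟩ := Finset.mem_image.mp (hφB s)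
    exact ⟨b, hb⟩
  choose g hg using hexA
  choose h hh using hexB
  have hφmono : StrictMono fun s : Fin k => (φ s : ℕ) := by
    intro s t hst
    exact_mod_cast φ.strictMono hst
  have hgmono : StrictMono g := by
    intro s t hst
    have hlt : j₁ (g s) < j₁ (g t) := by rw [hg, hg]; exact hφmono hst
    exact hj₁.lt_iff_lt.mp hlt
  have hhmono : StrictMono h := by
    intro s t hst
    have hlt : i₂ (h s) < i₂ (h t) := by rw [hh, hh]; exact hφmono hst
    exact hi₂.lt_iff_lt.mp hlt
  have hkmem : k ∈ fitSet T (δ₁ + δ₂) n x z := by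
    refine ⟨fun s => i₁ (g s), fun s => j₂ (h s), hi₁.comp hgmono, hj₂.comp hhmono,
      fun s => hi₁n _, fun s => hj₂n _, fun s => ?_⟩
    have heq : j₁ (g s) = i₂ (h s) := by rw [hg, hh]
    calc dist (T^[i₁ (g s)] x) (T^[j₂ (h s)] z)
        ≤ dist (T^[i₁ (g s)] x) (T^[j₁ (g s)] y)
          + dist (T^[j₁ (g s)] y) (T^[j₂ (h s)] z) := dist_triangle _ _ _
      _ < δ₁ + δ₂ := by
          refine add_lt_add (hd₁ (g s)) ?_
          rw [heq]; exact hd₂ (h s)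
  refine ⟨k, hkmem, ?_⟩
  have hcardA : A.card = k₁ := by
    rw [hA, Finset.card_image_of_injective _ hj₁.injective, Finset.card_univ, Fintype.card_fin]
  have hcardB : B.card = k₂ := by
    rw [hB, Finset.card_image_of_injective _ hi₂.injective, Finset.card_univ, Fintype.card_fin]
  have hAB : A ∪ B ⊆ Finset.range n := by
    intro m hm
    rcases Finset.mem_union.mp hm with hm | hm
    · obtain ⟨s, _, rfl⟩ := Finset.mem_image.mp hm
      exact Finset.mem_range.mpr (hj₁n s)
    · obtain ⟨s, _, rfl⟩ := Finset.mem_image.mp hm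
      exact Finset.mem_range.mpr (hi₂n s)
  have hcardAB : (A ∪ B).card ≤ n := by
    calc (A ∪ B).card ≤ (Finset.range n).card := Finset.card_le_card hAB
      _ = n := Finset.card_range n
  calc k₁ + k₂ = A.card + B.card := by rw [hcardA, hcardB]
    _ = (A ∪ B).card + (A ∩ B).card := (Finset.card_union_add_card_inter A B).symm
    _ ≤ n + k := add_le_add hcardAB (le_refl k)

lemma maxFit_triangle (T : X → X) (δ₁ δ₂ : ℝ) (n : ℕ) (x y z : X) :
    maxFit T δ₁ n x y + maxFit T δ₂ n y z ≤ n + maxFit T (δ₁ + δ₂) n x z := by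
  obtain ⟨k, hkmem, hk⟩ := fitSet_compose (maxFit_mem T δ₁ n x y) (maxFit_mem T δ₂ n y z)
  exact hk.trans (Nat.add_le_add_left (le_maxFit hkmem) n)

lemma fbarN_nonneg (T : X → X) (δ : ℝ) (n : ℕ) (x z : X) : 0 ≤ fbarN T δ n x z := by
  unfold fbarN
  rcases Nat.eq_zero_or_pos n with rfl | hn
  · simp
  · have h1 : (maxFit T δ n x z : ℝ) ≤ n := by exact_mod_cast maxFit_le T δ n x z
    have h2 : (0:ℝ) < n := by exact_mod_cast hn
    have : (maxFit T δ n x z : ℝ) / n ≤ 1 := by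
      rw [div_le_one h2]; exact h1
    linarith

lemma fbarN_le_one (T : X → X) (δ : ℝ) (n : ℕ) (x z : X) : fbarN T δ n x z ≤ 1 := by
  unfold fbarN
  have : (0:ℝ) ≤ (maxFit T δ n x z : ℝ) / n := by positivity
  linarith

lemma isBounded_le (T : X → X) (δ : ℝ) (x z : X) :
    IsBoundedUnder (· ≤ ·) atTop (fun n => fbarN T δ n x z) :=
  isBoundedUnder_of ⟨1, fun n : ℕ => fbarN_le_one T δ n x z⟩

lemma isBounded_ge (T : X → X) (δ : ℝ) (x z : X) :
    IsBoundedUnder (· ≥ ·) atTop (fun n => fbarN T δ n x z) :=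
  isBoundedUnder_of ⟨0, fun n : ℕ => fbarN_nonneg T δ n x z⟩

lemma fbar_le_one (T : X → X) (δ : ℝ) (x z : X) : fbar T δ x z ≤ 1 :=
  limsup_le_of_le (isBounded_ge T δ x z).isCoboundedUnder_le
    (Filter.Eventually.of_forall fun n => fbarN_le_one T δ n x z)

lemma fbar_self {T : X → X} {δ : ℝ} (hδ : 0 < δ) (x : X) : fbar T δ x x = 0 := by
  have heq : (fun n => fbarN T δ n x x) =ᶠ[atTop] fun _ => (0:ℝ) := by
    filter_upwards [eventually_ge_atTop 1] with n hn
    have hn' : (n:ℝ) ≠ 0 := by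
      exact_mod_cast Nat.one_le_iff_ne_zero.mp hn
    simp [fbarN, maxFit_self hδ, div_self hn']
  rw [fbar, limsup_congr heq, limsup_const]

lemma fbarN_triangle (T : X → X) (δ₁ δ₂ : ℝ) (n : ℕ) (x y z : X) :
    fbarN T (δ₁ + δ₂) n x z ≤ fbarN T δ₁ n x y + fbarN T δ₂ n y z := by
  rcases Nat.eq_zero_or_pos n with rfl | hn
  · simp [fbarN]
  · have hn' : (0:ℝ) < n := by exact_mod_cast hn
    have key : (maxFit T δ₁ n x y : ℝ) + maxFit T δ₂ n y z
        ≤ n + maxFit T (δ₁ + δ₂) n x z := by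
      exact_mod_cast maxFit_triangle T δ₁ δ₂ n x y z
    have h1 : ((maxFit T δ₁ n x y : ℝ) + maxFit T δ₂ n y z) / n
        ≤ ((n:ℝ) + maxFit T (δ₁ + δ₂) n x z) / n := by gcongr
    rw [add_div, add_div, div_self hn'.ne'] at h1
    unfold fbarN
    linarith

lemma fbar_triangle (T : X → X) (δ₁ δ₂ : ℝ) (x y z : X) :
    fbar T (δ₁ + δ₂) x z ≤ fbar T δ₁ x y + fbar T δ₂ y z := by
  have h1 : fbar T (δ₁ + δ₂) x z ≤
      limsup ((fun n => fbarN T δ₁ n x y) + fun n => fbarN T δ₂ n y z) atTop := by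
    refine limsup_le_limsup (Filter.Eventually.of_forall fun n => fbarN_triangle T δ₁ δ₂ n x y z)
      (isBounded_ge T (δ₁ + δ₂) x z).isCoboundedUnder_le ?_
    exact isBoundedUnder_le_add (isBounded_le T δ₁ x y) (isBounded_le T δ₂ y z)
  refine h1.trans ?_
  exact limsup_add_le (isBounded_ge T δ₁ x y) (isBounded_le T δ₁ x y)
    (isBounded_ge T δ₂ y z).isCoboundedUnder_le (isBounded_le T δ₂ y z)

lemma two_mem (T : X → X) (x z : X) : (2:ℝ) ∈ {δ : ℝ | 0 < δ ∧ fbar T δ x z < δ} :=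
  ⟨by norm_num, lt_of_le_of_lt (fbar_le_one T 2 x z) (by norm_num)⟩

lemma rhoSet_bddBelow (T : X → X) (x z : X) :
    BddBelow {δ : ℝ | 0 < δ ∧ fbar T δ x z < δ} :=
  ⟨0, fun δ hδ => hδ.1.le⟩

end FKAux

open FKPaper FKAux Filter Topology MeasureTheory Set

/-- `ρ_FK` is a pseudometric on `X`. -/
theorem rhoFK_pseudometric {X : Type*} [MetricSpace X] [CompactSpace X] [Nonempty X]
    (T : X → X) (hT : Continuous T) :
    (∀ x : X, rhoFK T x x = 0) ∧
    (∀ x y : X, rhoFK T x y = rhoFK T y x) ∧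
    (∀ x y z : X, rhoFK T x z ≤ rhoFK T x y + rhoFK T y z) := by
  refine ⟨?_, ?_, ?_⟩
  · intro x
    have hset : {δ : ℝ | 0 < δ ∧ fbar T δ x x < δ} = Ioi 0 := by
      ext δ
      simp only [mem_setOf_eq, mem_Ioi]
      exact ⟨fun hδ => hδ.1, fun hδ => ⟨hδ, by rw [fbar_self hδ x]; exact hδ⟩⟩
    rw [rhoFK, hset, csInf_Ioi]
  · intro x y
    have hfbar : ∀ δ : ℝ, fbar T δ x y = fbar T δ y x := by
      intro δ
      unfold fbar fbarN
      congr 1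
      ext n
      rw [maxFit_symm]
    unfold rhoFK
    congr 1
    ext δ
    simp only [mem_setOf_eq, hfbar]
  · intro x y z
    set S₁ := {δ : ℝ | 0 < δ ∧ fbar T δ x y < δ} with hS₁
    set S₂ := {δ : ℝ | 0 < δ ∧ fbar T δ y z < δ} with hS₂
    have hsum : ∀ δ₁ ∈ S₁, ∀ δ₂ ∈ S₂, rhoFK T x z ≤ δ₁ + δ₂ := by
      intro δ₁ hδ₁ δ₂ hδ₂
      have hmem : δ₁ + δ₂ ∈ {δ : ℝ | 0 < δ ∧ fbar T δ x z < δ} := by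
        refine ⟨add_pos hδ₁.1 hδ₂.1, ?_⟩
        calc fbar T (δ₁ + δ₂) x z ≤ fbar T δ₁ x y + fbar T δ₂ y z :=
          fbar_triangle T δ₁ δ₂ x y z
          _ < δ₁ + δ₂ := add_lt_add hδ₁.2 hδ₂.2
      exact csInf_le (rhoSet_bddBelow T x z) hmem
    have h1 : ∀ δ₂ ∈ S₂, rhoFK T x z - δ₂ ≤ rhoFK T x y := by
      intro δ₂ hδ₂
      refine le_csInf ⟨2, two_mem T x y⟩ fun δ₁ hδ₁ => ?_
      linarith [hsum δ₁ hδ₁ δ₂ hδ₂]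
    have h2 : rhoFK T x z - rhoFK T x y ≤ rhoFK T y z := by
      refine le_csInf ⟨2, two_mem T y z⟩ fun δ₂ hδ₂ => ?_
      linarith [h1 δ₂ hδ₂]
    linarith
end

section
/- Let (X,T) be a TDS. The Feldman–Katok pseudometric is invariant along orbits: for every n ≥ 0 and all x,y ∈ X one has ρ_FK(T^n x, y) = ρ_FK(x, y). -/
open Filter Topology MeasureTheory Set

namespace FKPaper

variable {X : Type*} [MetricSpace X]

/-- The set whose supremum defines `maxFit`. -/
def fitSet (T : X → X) (δ : ℝ) (n : ℕ) (x z : X) : Set ℕ :=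
  {k : ℕ | ∃ i j : Fin k → ℕ, StrictMono i ∧ StrictMono j ∧
    (∀ s, i s < n) ∧ (∀ s, j s < n) ∧ ∀ s, dist (T^[i s] x) (T^[j s] z) < δ}

lemma maxFit_eq (T : X → X) (δ : ℝ) (n : ℕ) (x z : X) :
    maxFit T δ n x z = sSup (fitSet T δ n x z) := rfl

lemma zero_mem_fitSet (T : X → X) (δ : ℝ) (n : ℕ) (x z : X) :
    0 ∈ fitSet T δ n x z :=
  ⟨Fin.elim0, Fin.elim0, fun s => s.elim0, fun s => s.elim0,
    fun s => s.elim0, fun s => s.elim0, fun s => s.elim0⟩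

lemma strictMono_fin_le {k : ℕ} {f : Fin k → ℕ} (h : StrictMono f) :
    ∀ s : Fin k, (s : ℕ) ≤ f s := by
  have key : ∀ v : ℕ, ∀ hv : v < k, v ≤ f ⟨v, hv⟩ := by
    intro v
    induction v with
    | zero => intro hv; exact Nat.zero_le _
    | succ n ih =>
      intro hv
      have h1 : f ⟨n, by omega⟩ < f ⟨n + 1, hv⟩ := h (by simp [Fin.lt_def])
      have h2 := ih (by omega)
      omega
  intro s
  simpa using key s.1 s.2

lemma mem_fitSet_le {T : X → X} {δ : ℝ} {n : ℕ} {x z : X} {k : ℕ}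
    (hk : k ∈ fitSet T δ n x z) : k ≤ n := by
  obtain ⟨i, j, hi, hj, hin, _, _⟩ := hk
  rcases Nat.eq_zero_or_pos k with h | h
  · omega
  · have h1 := strictMono_fin_le hi ⟨k - 1, by omega⟩
    have h2 := hin ⟨k - 1, by omega⟩
    simp only at h1 h2
    omega

lemma fitSet_bddAbove (T : X → X) (δ : ℝ) (n : ℕ) (x z : X) :
    BddAbove (fitSet T δ n x z) :=
  ⟨n, fun _ hk => mem_fitSet_le hk⟩

lemma maxFit_le (T : X → X) (δ : ℝ) (n : ℕ) (x z : X) : maxFit T δ n x z ≤ n :=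
  csSup_le ⟨0, zero_mem_fitSet T δ n x z⟩ fun _ hk => mem_fitSet_le hk

/-- Lemma A: a match of `(T^[k] x, y)` in window `m` gives a match of `(x,y)` in window `m+k`. -/
lemma maxFit_shift_le (T : X → X) (δ : ℝ) (m k : ℕ) (x y : X) :
    maxFit T δ m (T^[k] x) y ≤ maxFit T δ (m + k) x y := by
  refine csSup_le ⟨0, zero_mem_fitSet T δ m (T^[k] x) y⟩ fun M hM => ?_
  obtain ⟨i, j, hi, hj, hin, hjn, hd⟩ := hM
  refine le_csSup (fitSet_bddAbove T δ (m + k) x y) ?_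
  refine ⟨fun s => i s + k, j, ?_, hj, ?_, ?_, ?_⟩
  · intro a b hab
    have h1 := hi hab
    show i a + k < i b + k
    omega
  · intro s
    show i s + k < m + k
    have := hin s; omega
  · intro s
    exact (hjn s).trans_le (Nat.le_add_right m k)
  · intro s
    show dist (T^[i s + k] x) (T^[j s] y) < δ
    rw [Function.iterate_add_apply]
    exact hd s

/-- Lemma B: a match of `(x,y)` in window `m` gives a match of `(T^[k] x, y)` in window `m`,
losing at most `k` points. -/
lemma maxFit_le_shift_add (T : X → X) (δ : ℝ) (m k : ℕ) (x y : X) :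
    maxFit T δ m x y ≤ maxFit T δ m (T^[k] x) y + k := by
  refine csSup_le ⟨0, zero_mem_fitSet T δ m x y⟩ fun M hM => ?_
  obtain ⟨i, j, hi, hj, hin, hjn, hd⟩ := hM
  have hlt : ∀ t : Fin (M - k), t.val + k < M := fun t => by have := t.isLt; omega
  have hkle : ∀ t : Fin (M - k), k ≤ i ⟨t.val + k, hlt t⟩ := fun t => by
    have := strictMono_fin_le hi ⟨t.val + k, hlt t⟩
    simp only [Fin.val_mk] at this
    omega
  have hmem : M - k ∈ fitSet T δ m (T^[k] x) y := by
    refine ⟨fun t => i ⟨t.val + k, hlt t⟩ - k, fun t => j ⟨t.val + k, hlt t⟩,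
      ?_, ?_, ?_, ?_, ?_⟩
    · intro a b hab
      have hab' : (⟨a.val + k, hlt a⟩ : Fin M) < ⟨b.val + k, hlt b⟩ := by
        simp only [Fin.lt_def, Fin.val_mk]
        have : a.val < b.val := hab
        omega
      have h1 := hi hab'
      have h2 := hkle a
      show i ⟨a.val + k, hlt a⟩ - k < i ⟨b.val + k, hlt b⟩ - k
      omega
    · intro a b hab
      apply hj
      simp only [Fin.lt_def, Fin.val_mk]
      have : a.val < b.val := hab
      omega
    · intro t
      have := hin ⟨t.val + k, hlt t⟩
      show i ⟨t.val + k, hlt t⟩ - k < m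
      omega
    · intro t
      exact hjn ⟨t.val + k, hlt t⟩
    · intro t
      show dist (T^[i ⟨t.val + k, hlt t⟩ - k] (T^[k] x)) (T^[j ⟨t.val + k, hlt t⟩] y) < δ
      have heq : (i ⟨t.val + k, hlt t⟩ - k) + k = i ⟨t.val + k, hlt t⟩ := by
        have := hkle t; omega
      rw [← Function.iterate_add_apply, heq]
      exact hd ⟨t.val + k, hlt t⟩
  have h4 : M - k ≤ maxFit T δ m (T^[k] x) y := by
    rw [maxFit_eq]
    exact le_csSup (fitSet_bddAbove T δ m (T^[k] x) y) hmem
  omega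

lemma fbarN_nonneg (T : X → X) (δ : ℝ) (n : ℕ) (x z : X) : 0 ≤ fbarN T δ n x z := by
  unfold fbarN
  rcases Nat.eq_zero_or_pos n with h | h
  · simp [h]
  · have h1 : (maxFit T δ n x z : ℝ) ≤ (n : ℝ) := by
      exact_mod_cast maxFit_le T δ n x z
    have h2 : (0 : ℝ) < n := by exact_mod_cast h
    have := div_le_one_of_le₀ h1 h2.le
    linarith

lemma fbarN_le_one (T : X → X) (δ : ℝ) (n : ℕ) (x z : X) : fbarN T δ n x z ≤ 1 := by
  unfold fbarN
  have : (0 : ℝ) ≤ (maxFit T δ n x z : ℝ) / n := by positivity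
  linarith

lemma div_sub_div_le_div {a m k : ℝ} (hm : 0 < m) (hk : 0 ≤ k) (ha : 0 ≤ a) (ham : a ≤ m) :
    a / m - a / (m + k) ≤ k / m := by
  have hmk : 0 < m + k := by linarith
  rw [div_sub_div _ _ hm.ne' hmk.ne', div_le_div_iff₀ (by positivity) hm]
  nlinarith [mul_nonneg (mul_nonneg hk hm.le) (sub_nonneg.2 ham),
    mul_nonneg (mul_nonneg hk hk) hm.le]

lemma fbar_shift (T : X → X) (δ : ℝ) (k : ℕ) (x y : X) :
    fbar T δ (T^[k] x) y = fbar T δ x y := by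
  set F : ℕ → ℝ := fun m => fbarN T δ m x y with hF
  set G : ℕ → ℝ := fun m => fbarN T δ m (T^[k] x) y with hG
  have hFb : IsBoundedUnder (· ≤ ·) atTop F :=
    isBoundedUnder_of ⟨1, fun m => fbarN_le_one _ _ _ _ _⟩
  have hGb : IsBoundedUnder (· ≤ ·) atTop G :=
    isBoundedUnder_of ⟨1, fun m => fbarN_le_one _ _ _ _ _⟩
  have hGc : IsCoboundedUnder (· ≤ ·) atTop G :=
    isCoboundedUnder_le_of_le atTop (fun m => fbarN_nonneg _ _ _ _ _)
  have hFkc : IsCoboundedUnder (· ≤ ·) atTop (fun m => F (m + k)) :=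
    isCoboundedUnder_le_of_le atTop (fun m => fbarN_nonneg _ _ _ _ _)
  have htend : Tendsto (fun m : ℕ => (k : ℝ) / m) atTop (𝓝 0) :=
    tendsto_const_div_atTop_nhds_zero_nat (k : ℝ)
  have hk0 : (0 : ℝ) ≤ k := Nat.cast_nonneg k
  -- key inequality (i): G m ≤ F m + k / m for m ≥ 1
  have hGF : ∀ m : ℕ, 1 ≤ m → G m ≤ F m + (k : ℝ) / m := by
    intro m hm
    have hmpos : (0 : ℝ) < m := by exact_mod_cast hm
    have hcast : (maxFit T δ m x y : ℝ) ≤ (maxFit T δ m (T^[k] x) y : ℝ) + k := by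
      exact_mod_cast maxFit_le_shift_add T δ m k x y
    have key : (maxFit T δ m x y : ℝ) / m ≤ (maxFit T δ m (T^[k] x) y : ℝ) / m + (k : ℝ) / m := by
      rw [← add_div]
      exact div_le_div_of_nonneg_right hcast hmpos.le
    simp only [hF, hG, fbarN]
    linarith
  -- key inequality (ii): F (m+k) ≤ G m + k / m for m ≥ 1
  have hFG : ∀ m : ℕ, 1 ≤ m → F (m + k) ≤ G m + (k : ℝ) / m := by
    intro m hm
    have hmpos : (0 : ℝ) < m := by exact_mod_cast hm
    have hmkpos : (0 : ℝ) < (m : ℝ) + k := by linarith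
    have h1 : (maxFit T δ m (T^[k] x) y : ℝ) ≤ (maxFit T δ (m + k) x y : ℝ) := by
      exact_mod_cast maxFit_shift_le T δ m k x y
    have h2 : (maxFit T δ m (T^[k] x) y : ℝ) ≤ m := by
      exact_mod_cast maxFit_le T δ m (T^[k] x) y
    have h3 : (0 : ℝ) ≤ (maxFit T δ m (T^[k] x) y : ℝ) := Nat.cast_nonneg _
    set a : ℝ := (maxFit T δ m (T^[k] x) y : ℝ) with ha
    have hstep : (1 : ℝ) - a / ((m : ℝ) + k) ≤ 1 - a / m + (k : ℝ) / m := by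
      have hsub : a / (m : ℝ) - a / ((m : ℝ) + k) ≤ (k : ℝ) / m :=
        div_sub_div_le_div hmpos hk0 h3 h2
      linarith
    have hmain : F (m + k) ≤ 1 - a / ((m : ℝ) + k) := by
      simp only [hF, fbarN]
      have : a / ((m : ℝ) + k) ≤ (maxFit T δ (m + k) x y : ℝ) / ((m : ℝ) + k) :=
        div_le_div_of_nonneg_right h1 hmkpos.le
      push_cast
      push_cast at this
      linarith
    calc F (m + k) ≤ 1 - a / ((m : ℝ) + k) := hmain
      _ ≤ 1 - a / m + (k : ℝ) / m := hstep
      _ = G m + (k : ℝ) / m := by simp only [hG, fbarN, ha]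
  -- limsup G ≤ limsup F
  have le1 : limsup G atTop ≤ limsup F atTop := by
    refine le_of_forall_pos_le_add fun ε hε => ?_
    have h1 : ∀ᶠ m in atTop, F m < limsup F atTop + ε / 2 :=
      eventually_lt_of_limsup_lt (lt_add_of_pos_right _ (by linarith)) hFb
    have h2 : ∀ᶠ m : ℕ in atTop, (k : ℝ) / (m : ℝ) < ε / 2 :=
      htend.eventually (gt_mem_nhds (show (0:ℝ) < ε / 2 by linarith))
    have h3 : ∀ᶠ m in atTop, 1 ≤ m := eventually_ge_atTop 1
    refine limsup_le_of_le hGc ?_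
    filter_upwards [h1, h2, h3] with m hm1 hm2 hm3
    have := hGF m hm3
    linarith
  -- limsup F ≤ limsup G
  have le2 : limsup F atTop ≤ limsup G atTop := by
    rw [← limsup_nat_add F k]
    refine le_of_forall_pos_le_add fun ε hε => ?_
    have h1 : ∀ᶠ m in atTop, G m < limsup G atTop + ε / 2 :=
      eventually_lt_of_limsup_lt (lt_add_of_pos_right _ (by linarith)) hGb
    have h2 : ∀ᶠ m : ℕ in atTop, (k : ℝ) / (m : ℝ) < ε / 2 :=
      htend.eventually (gt_mem_nhds (show (0:ℝ) < ε / 2 by linarith))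
    have h3 : ∀ᶠ m in atTop, 1 ≤ m := eventually_ge_atTop 1
    refine limsup_le_of_le hFkc ?_
    filter_upwards [h1, h2, h3] with m hm1 hm2 hm3
    have := hFG m hm3
    linarith
  exact le_antisymm le1 le2

end FKPaper

open FKPaper Filter Topology MeasureTheory Set

/-- `ρ_FK` is invariant along orbits. -/
theorem rhoFK_orbit_invariant {X : Type*} [MetricSpace X] [CompactSpace X] [Nonempty X]
    (T : X → X) (hT : Continuous T) :
    ∀ (n : ℕ) (x y : X), rhoFK T (T^[n] x) y = rhoFK T x y := by
  intro n x y
  unfold rhoFK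
  congr 1
  ext δ
  simp only [Set.mem_setOf_eq, fbar_shift]
end

section
/- Let (X,T) be a TDS. If there exist two distinct T-invariant ergodic Borel probability measures on X, each with full support, then (X,T) is mean sensitive. -/
open Filter Topology MeasureTheory Set

namespace FKPaper

variable {X : Type*} [MetricSpace X]

/-- The Besicovitch pseudometric
`ρ_B(x,z) = limsup_{n→∞} (1/n) ∑_{j<n} d(Tʲx,Tʲz)`. -/
noncomputable def rhoB (T : X → X) (x z : X) : ℝ :=
  Filter.limsup
    (fun n => (∑ j ∈ Finset.range n, dist (T^[j] x) (T^[j] z)) / n) Filter.atTop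

/-- Mean sensitivity (with respect to the Besicovitch pseudometric). -/
def MeanSensitive (T : X → X) : Prop :=
  ∃ ε > 0, ∀ U : Set X, IsOpen U → U.Nonempty →
    ∃ x ∈ U, ∃ y ∈ U, ε < rhoB T x y

end FKPaper

open FKPaper Filter Topology MeasureTheory Set


section Aux

variable {X : Type*} [MetricSpace X] [CompactSpace X] [Nonempty X]
  [MeasurableSpace X] [BorelSpace X]

set_option maxHeartbeats 1000000 in
/-- Birkhoff averages of a continuous function converge in measure to the integral,
for an ergodic probability measure (via the von Neumann mean ergodic theorem). -/
lemma tendstoInMeasure_birkhoff (T : X → X) (μ : Measure X) [IsProbabilityMeasure μ]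
    (hμ : Ergodic T μ) {f : X → ℝ} (hf : Continuous f) :
    TendstoInMeasure μ
      (fun n x => (∑ k ∈ Finset.range n, f (T^[k] x)) / (n : ℝ)) Filter.atTop
      (fun _ => ∫ x, f x ∂μ) := by
  have hmp : MeasurePreserving T μ μ := hμ.toMeasurePreserving
  obtain ⟨C, hC⟩ : ∃ C, ∀ x, ‖f x‖ ≤ C := by
    obtain ⟨x0, -, hx0⟩ := isCompact_univ.exists_isMaxOn univ_nonempty
      (continuous_norm.comp hf).continuousOn
    exact ⟨‖f x0‖, fun x => hx0 (mem_univ x)⟩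
  have hfm : MemLp f 2 μ :=
    MemLp.of_bound hf.aestronglyMeasurable C (Eventually.of_forall hC)
  set I := Lp.compMeasurePreservingₗᵢ (E := ℝ) (p := 2) ℝ T hmp with hIdef
  set F : Lp ℝ 2 μ := hfm.toLp f with hFdef
  set K : Lp ℝ 2 μ →L[ℝ] Lp ℝ 2 μ := I.toContinuousLinearMap with hKdef
  have hKcoe : ∀ g : Lp ℝ 2 μ, ⇑(K g) =ᵐ[μ] ⇑g ∘ T := fun g =>
    Lp.coeFn_compMeasurePreserving g hmp
  have hKnormmap : ∀ g : Lp ℝ 2 μ, ‖K g‖ = ‖g‖ := fun g => I.norm_map g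
  have hiter : ∀ n : ℕ, ⇑((⇑K)^[n] F) =ᵐ[μ] fun x => f (T^[n] x) := by
    intro n
    induction n with
    | zero => simpa using hfm.coeFn_toLp
    | succ n ih =>
      rw [Function.iterate_succ_apply']
      have h2 : ⇑((⇑K)^[n] F) ∘ T =ᵐ[μ] (fun x => f (T^[n] x)) ∘ T :=
        hmp.quasiMeasurePreserving.ae_eq_comp ih
      refine (hKcoe _).trans (h2.trans ?_)
      apply Eventually.of_forall
      intro x
      simp [Function.comp, Function.iterate_succ_apply]
  have hsum : ∀ n : ℕ, ⇑(birkhoffAverage ℝ (⇑K) id n F) =ᵐ[μ]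
      fun x => (∑ k ∈ Finset.range n, f (T^[k] x)) / (n : ℝ) := by
    intro n
    have hs : ⇑(∑ k ∈ Finset.range n, (⇑K)^[k] F) =ᵐ[μ]
        fun x => ∑ k ∈ Finset.range n, f (T^[k] x) := by
      induction n with
      | zero =>
        simp only [Finset.range_zero, Finset.sum_empty]
        exact (Lp.coeFn_zero (E := ℝ) (p := 2) (μ := μ)).trans
          (Filter.Eventually.of_forall fun x => rfl)
      | succ n ih =>
        rw [Finset.sum_range_succ]
        refine (Lp.coeFn_add _ _).trans ?_
        filter_upwards [ih, hiter n] with x h1 h2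
        simp only [Pi.add_apply, h1, h2, Finset.sum_range_succ]
    have hba : birkhoffAverage ℝ (⇑K) id n F
        = (n : ℝ)⁻¹ • ∑ k ∈ Finset.range n, (⇑K)^[k] F := by
      simp [birkhoffAverage, birkhoffSum]
    rw [hba]
    refine (Lp.coeFn_smul _ _).trans ?_
    filter_upwards [hs] with x hx
    simp only [Pi.smul_apply, hx, smul_eq_mul]
    rw [div_eq_inv_mul]
  have hKnorm : ‖K‖ ≤ 1 := LinearIsometry.norm_toContinuousLinearMap_le _
  obtain ⟨Q, hQlim⟩ : ∃ Q : Lp ℝ 2 μ,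
      Tendsto (fun n => birkhoffAverage ℝ (⇑K) id n F) atTop (𝓝 Q) :=
    ⟨_, K.tendsto_birkhoffAverage_orthogonalProjection hKnorm F⟩
  -- `Q` is `K`-invariant
  have hiter_norm : ∀ n : ℕ, ‖(⇑K)^[n] F‖ = ‖F‖ := by
    intro n
    induction n with
    | zero => rfl
    | succ n ih => rw [Function.iterate_succ_apply', hKnormmap, ih]
  have hbdd : Bornology.IsBounded (Set.range (id <| (⇑K)^[·] F)) := by
    refine isBounded_iff_forall_norm_le.2 ⟨‖F‖, ?_⟩
    rintro y ⟨n, rfl⟩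
    simpa using (hiter_norm n).le
  have hsub0 : Tendsto (fun n => birkhoffAverage ℝ (⇑K) id n (K F)
      - birkhoffAverage ℝ (⇑K) id n F) atTop (𝓝 0) :=
    tendsto_birkhoffAverage_apply_sub_birkhoffAverage ℝ hbdd
  have hcomm : ∀ n, K (birkhoffAverage ℝ (⇑K) id n F)
      = birkhoffAverage ℝ (⇑K) id n (K F) := by
    intro n
    simp only [birkhoffAverage, birkhoffSum, id]
    rw [K.map_smul, map_sum K (fun k => (⇑K)^[k] F) (Finset.range n)]
    congr 1
    refine Finset.sum_congr rfl fun k _ => ?_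
    rw [← Function.iterate_succ_apply' (⇑K) k F, Function.iterate_succ_apply]
  have hKQ : K Q = Q := by
    have h1 : Tendsto (fun n => K (birkhoffAverage ℝ (⇑K) id n F)) atTop (𝓝 (K Q)) :=
      (K.continuous.tendsto Q).comp hQlim
    have h2 : Tendsto (fun n => K (birkhoffAverage ℝ (⇑K) id n F)) atTop (𝓝 Q) := by
      have := hsub0.add hQlim
      rw [zero_add] at this
      refine this.congr fun n => ?_
      rw [hcomm]
      abel
    exact tendsto_nhds_unique h1 h2
  -- `Q` is a.e. constant
  have hQT : ⇑Q ∘ T =ᵐ[μ] ⇑Q := by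
    have h1 := hKcoe Q
    rw [hKQ] at h1
    exact h1.symm
  obtain ⟨c, hc⟩ := hμ.ae_eq_const_of_ae_eq_comp_ae (Lp.aestronglyMeasurable Q) hQT
  -- identify the constant using the inner product with the constant function 1
  set one : Lp ℝ 2 μ := Lp.const 2 μ (1 : ℝ) with honedef
  have hKone : K one = one := by
    apply Lp.ext
    refine (hKcoe _).trans ?_
    have h1 : ⇑one =ᵐ[μ] Function.const X (1 : ℝ) := Lp.coeFn_const 2 μ (1 : ℝ)
    refine (hmp.quasiMeasurePreserving.ae_eq_comp h1).trans ?_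
    exact h1.symm
  have hInner : ∀ g h : Lp ℝ 2 μ, (inner ℝ (K g) (K h) : ℝ) = inner ℝ g h := fun g h =>
    I.inner_map_map g h
  have hinner_iter : ∀ k : ℕ, (inner ℝ ((⇑K)^[k] F) one : ℝ) = inner ℝ F one := by
    intro k
    induction k with
    | zero => rfl
    | succ k ih =>
      rw [Function.iterate_succ_apply']
      calc (inner ℝ (K ((⇑K)^[k] F)) one : ℝ)
          = inner ℝ (K ((⇑K)^[k] F)) (K one) := by rw [hKone]
        _ = inner ℝ ((⇑K)^[k] F) one := hInner _ _
        _ = inner ℝ F one := ih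
  have hAn : ∀ n : ℕ, n ≠ 0 →
      (inner ℝ (birkhoffAverage ℝ (⇑K) id n F) one : ℝ) = inner ℝ F one := by
    intro n hn
    have hba : birkhoffAverage ℝ (⇑K) id n F
        = (n : ℝ)⁻¹ • ∑ k ∈ Finset.range n, (⇑K)^[k] F := by
      simp [birkhoffAverage, birkhoffSum]
    rw [hba, real_inner_smul_left, sum_inner]
    rw [Finset.sum_congr rfl fun k _ => hinner_iter k]
    rw [Finset.sum_const, Finset.card_range, nsmul_eq_mul]
    rw [← mul_assoc, inv_mul_cancel₀ (by exact_mod_cast hn), one_mul]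
  have hQone : (inner ℝ Q one : ℝ) = inner ℝ F one := by
    have h1 : Tendsto (fun n => (inner ℝ (birkhoffAverage ℝ (⇑K) id n F) one : ℝ))
        atTop (𝓝 (inner ℝ Q one)) := hQlim.inner tendsto_const_nhds
    have h2 : Tendsto (fun n => (inner ℝ (birkhoffAverage ℝ (⇑K) id n F) one : ℝ))
        atTop (𝓝 (inner ℝ F one)) := by
      refine tendsto_const_nhds.congr' ?_
      filter_upwards [eventually_ne_atTop 0] with n hn
      exact (hAn n hn).symm
    exact tendsto_nhds_unique h1 h2
  have hone_ae : ⇑one =ᵐ[μ] Function.const X (1 : ℝ) := Lp.coeFn_const 2 μ (1 : ℝ)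
  have hinnerF : (inner ℝ F one : ℝ) = ∫ x, f x ∂μ := by
    rw [L2.inner_def]
    rw [integral_congr_ae (g := f) ?_]
    · filter_upwards [hfm.coeFn_toLp, hone_ae] with a h1 h2
      simp [hFdef, h1, h2, RCLike.inner_apply, Function.const]
  have hinnerQ : (inner ℝ Q one : ℝ) = c := by
    rw [L2.inner_def]
    rw [integral_congr_ae (g := fun _ => c) ?_]
    · simp
    · filter_upwards [hc, hone_ae] with a h1 h2
      simp [h1, h2, RCLike.inner_apply, Function.const]
  have hceq : c = ∫ x, f x ∂μ := by rw [← hinnerF, ← hQone, hinnerQ]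
  have hQconst : ⇑Q =ᵐ[μ] fun _ => ∫ x, f x ∂μ := by
    rw [← hceq]; exact hc
  have htim : TendstoInMeasure μ (fun n => ⇑(birkhoffAverage ℝ (⇑K) id n F)) atTop ⇑Q :=
    tendstoInMeasure_of_tendsto_Lp hQlim
  exact htim.congr hsum hQconst

/-- Common subsequence along which Birkhoff averages converge a.e. for both measures. -/
lemma exists_subseq_generic (T : X → X) (μ ν : Measure X) [IsProbabilityMeasure μ]
    [IsProbabilityMeasure ν] (hμ : Ergodic T μ) (hν : Ergodic T ν)
    {f : X → ℝ} (hf : Continuous f) :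
    ∃ ns : ℕ → ℕ, StrictMono ns ∧
      (∀ᵐ x ∂μ, Tendsto (fun i => (∑ k ∈ Finset.range (ns i), f (T^[k] x)) / (ns i : ℝ))
        atTop (𝓝 (∫ x, f x ∂μ))) ∧
      (∀ᵐ y ∂ν, Tendsto (fun i => (∑ k ∈ Finset.range (ns i), f (T^[k] y)) / (ns i : ℝ))
        atTop (𝓝 (∫ x, f x ∂ν))) := by
  obtain ⟨ns1, hns1, hae1⟩ := (tendstoInMeasure_birkhoff T μ hμ hf).exists_seq_tendsto_ae
  have h2 : TendstoInMeasure ν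
      (fun i x => (∑ k ∈ Finset.range (ns1 i), f (T^[k] x)) / (ns1 i : ℝ)) atTop
      (fun _ => ∫ x, f x ∂ν) :=
    fun ε hε => (tendstoInMeasure_birkhoff T ν hν hf ε hε).comp hns1.tendsto_atTop
  obtain ⟨ns2, hns2, hae2⟩ := h2.exists_seq_tendsto_ae
  refine ⟨ns1 ∘ ns2, hns1.comp hns2, ?_, hae2⟩
  filter_upwards [hae1] with x hx using hx.comp hns2.tendsto_atTop

/-- From an a.e. property and a set of nonzero measure, find a point in the set with
the property. -/
lemma exists_mem_of_ae {α : Type*} [MeasurableSpace α] {μ : Measure α} {U : Set α}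
    (hU : μ U ≠ 0) {p : α → Prop} (hp : ∀ᵐ x ∂μ, p x) : ∃ x ∈ U, p x := by
  have h1 : μ {x | ¬ p x} = 0 := hp
  have h2 : μ (U ∩ {x | p x}) ≠ 0 := by
    intro h0
    apply hU
    have hsub : U ⊆ (U ∩ {x | p x}) ∪ {x | ¬ p x} := by
      intro x hx
      by_cases hpx : p x
      exacts [Or.inl ⟨hx, hpx⟩, Or.inr hpx]
    refine le_antisymm ((measure_mono hsub).trans ?_) (by simp)
    exact (measure_union_le _ _).trans (by simp [h0, h1])
  obtain ⟨x, hx⟩ := nonempty_of_measure_ne_zero h2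
  exact ⟨x, hx.1, hx.2⟩

end Aux

set_option maxHeartbeats 1000000 in
/-- two distinct fully supported ergodic invariant measures force
mean sensitivity. -/
theorem meanSensitive_of_two_fully_supported_ergodic {X : Type*} [MetricSpace X] [CompactSpace X] [Nonempty X]
    (T : X → X) (hT : Continuous T) [MeasurableSpace X] [BorelSpace X]
    (μ ν : Measure X) [IsProbabilityMeasure μ] [IsProbabilityMeasure ν]
    (hμ : Ergodic T μ) (hν : Ergodic T ν)
    (hμsupp : ∀ U : Set X, IsOpen U → U.Nonempty → 0 < μ U)
    (hνsupp : ∀ U : Set X, IsOpen U → U.Nonempty → 0 < ν U)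
    (hne : μ ≠ ν) :
    MeanSensitive T := by
  classical
  -- a closed set on which the two measures differ
  obtain ⟨F0, hF0closed, hF0ne⟩ : ∃ F : Set X, IsClosed F ∧ μ F ≠ ν F := by
    by_contra hcon
    push_neg at hcon
    exact hne (MeasureTheory.ext_of_generate_finite {s : Set X | IsClosed s}
      ((BorelSpace.measurable_eq (α := X)).trans borel_eq_generateFrom_isClosed)
      isPiSystem_isClosed (fun s hs => hcon s hs) (hcon _ isClosed_univ))
  have hF0nonempty : F0.Nonempty := by
    rw [nonempty_iff_ne_empty]
    rintro rfl
    simp at hF0ne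
  -- Lipschitz approximations of the indicator of `F0`
  set g : ℕ → X → ℝ := fun n x => max (1 - Metric.infDist x F0 * (n + 1)) 0 with hgdef
  have hgcont : ∀ n, Continuous (g n) := fun n =>
    (continuous_const.sub ((Metric.continuous_infDist_pt F0).mul continuous_const)).max
      continuous_const
  have hg0 : ∀ n x, 0 ≤ g n x := fun n x => le_max_right _ _
  have hg1 : ∀ n x, g n x ≤ 1 := by
    intro n x
    apply max_le _ zero_le_one
    have h1 : 0 ≤ Metric.infDist x F0 * (n + 1) :=
      mul_nonneg Metric.infDist_nonneg (by positivity)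
    linarith
  have hglim : ∀ x, Tendsto (fun n => g n x) atTop (𝓝 (Set.indicator F0 1 x)) := by
    intro x
    by_cases hx : x ∈ F0
    · simp only [hgdef, Metric.infDist_zero_of_mem hx, zero_mul, sub_zero,
        Set.indicator_of_mem hx, Pi.one_apply, max_eq_left zero_le_one]
      exact tendsto_const_nhds
    · have hd : 0 < Metric.infDist x F0 := (hF0closed.notMem_iff_infDist_pos hF0nonempty).1 hx
      rw [Set.indicator_of_notMem hx]
      refine tendsto_const_nhds.congr' ?_
      obtain ⟨N, hN⟩ := exists_nat_ge (1 / Metric.infDist x F0)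
      filter_upwards [eventually_ge_atTop N] with n hn
      have h2 : (1 : ℝ) ≤ Metric.infDist x F0 * (n + 1) := by
        rw [div_le_iff₀ hd] at hN
        have h3 : Metric.infDist x F0 * N ≤ Metric.infDist x F0 * (n + 1) := by
          have : (N : ℝ) ≤ (n : ℝ) + 1 := by
            have : (N : ℝ) ≤ (n : ℝ) := Nat.cast_le.2 hn
            linarith
          exact mul_le_mul_of_nonneg_left this hd.le
        calc (1 : ℝ) ≤ Metric.infDist x F0 * N := by rw [mul_comm]; exact hN
          _ ≤ _ := h3
      exact (max_eq_right (by linarith)).symm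
  -- the integrals converge to the measures of `F0`
  have hint : ∀ (P : Measure X), IsProbabilityMeasure P →
      Tendsto (fun n => ∫ x, g n x ∂P) atTop (𝓝 ((P F0).toReal)) := by
    intro P hP
    haveI := hP
    have hdc := MeasureTheory.tendsto_integral_of_dominated_convergence (μ := P)
      (F := fun n x => g n x) (f := Set.indicator F0 1) (bound := fun _ => (1 : ℝ))
      (fun n => (hgcont n).aestronglyMeasurable) (integrable_const 1)
      (fun n => Eventually.of_forall fun x => by
        rw [Real.norm_eq_abs, abs_of_nonneg (hg0 n x)]; exact hg1 n x)
      (Eventually.of_forall hglim)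
    rwa [integral_indicator_one hF0closed.measurableSet] at hdc
  obtain ⟨n₀, hn₀⟩ : ∃ n, ∫ x, g n x ∂μ ≠ ∫ x, g n x ∂ν := by
    by_contra hcall
    push_neg at hcall
    have h2 : Tendsto (fun n => ∫ x, g n x ∂μ) atTop (𝓝 ((ν F0).toReal)) :=
      (hint ν inferInstance).congr fun n => (hcall n).symm
    have h3 := tendsto_nhds_unique (hint μ inferInstance) h2
    exact hF0ne ((ENNReal.toReal_eq_toReal_iff' (measure_ne_top μ _) (measure_ne_top ν _)).1 h3)
  set f : X → ℝ := g n₀ with hfdef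
  have hfcont : Continuous f := hgcont n₀
  set L : ℝ := (n₀ : ℝ) + 1 with hLdef
  have hLpos : 0 < L := by positivity
  -- Lipschitz bound for f
  have hLip : ∀ a b : X, |f a - f b| ≤ L * dist a b := by
    intro a b
    have h1 : |f a - f b| ≤
        |(1 - Metric.infDist a F0 * ((n₀ : ℝ) + 1)) - (1 - Metric.infDist b F0 * ((n₀ : ℝ) + 1))| :=
      abs_max_sub_max_le_abs _ _ _
    have h2 : (1 - Metric.infDist a F0 * ((n₀ : ℝ) + 1))
        - (1 - Metric.infDist b F0 * ((n₀ : ℝ) + 1))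
        = (Metric.infDist b F0 - Metric.infDist a F0) * L := by rw [hLdef]; ring
    rw [h2, abs_mul, abs_of_pos hLpos] at h1
    refine h1.trans ?_
    rw [mul_comm]
    refine mul_le_mul_of_nonneg_left ?_ hLpos.le
    rw [abs_sub_le_iff]
    constructor
    · have h3 := Metric.infDist_le_infDist_add_dist (x := b) (y := a) (s := F0)
      have h4 : dist b a = dist a b := dist_comm b a
      linarith
    · have h3 := Metric.infDist_le_infDist_add_dist (x := a) (y := b) (s := F0)
      have h4 : dist a b = dist b a := dist_comm a b
      linarith
  set c0 : ℝ := |∫ x, f x ∂μ - ∫ x, f x ∂ν| with hc0def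
  have hc0pos : 0 < c0 := abs_pos.2 (sub_ne_zero.2 hn₀)
  obtain ⟨ns, hns, haeμ, haeν⟩ := exists_subseq_generic T μ ν hμ hν hfcont
  set D := Metric.diam (Set.univ : Set X) with hDdef
  refine ⟨c0 / (4 * L), by positivity, ?_⟩
  intro U hUopen hUne
  obtain ⟨x, hxU, hx⟩ := exists_mem_of_ae (hμsupp U hUopen hUne).ne' haeμ
  obtain ⟨y, hyU, hy⟩ := exists_mem_of_ae (hνsupp U hUopen hUne).ne' haeν
  refine ⟨x, hxU, y, hyU, ?_⟩
  set v : ℕ → ℝ := fun n => (∑ j ∈ Finset.range n, dist (T^[j] x) (T^[j] y)) / n with hvdef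
  have hvD : ∀ n, v n ≤ D := by
    intro n
    have h1 : ∑ j ∈ Finset.range n, dist (T^[j] x) (T^[j] y) ≤ n * D := by
      calc ∑ j ∈ Finset.range n, dist (T^[j] x) (T^[j] y)
          ≤ ∑ _j ∈ Finset.range n, D := Finset.sum_le_sum fun j _ =>
            Metric.dist_le_diam_of_mem isCompact_univ.isBounded (mem_univ _) (mem_univ _)
        _ = n * D := by simp [mul_comm]
    rcases Nat.eq_zero_or_pos n with rfl | hn
    · simpa [hvdef, hDdef] using Metric.diam_nonneg (s := (Set.univ : Set X))
    · rw [hvdef]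
      have hn' : (0 : ℝ) < n := by exact_mod_cast hn
      rw [div_le_iff₀ hn']
      calc ∑ j ∈ Finset.range n, dist (T^[j] x) (T^[j] y) ≤ n * D := h1
        _ = D * n := mul_comm _ _
  have hbound : ∀ n : ℕ, |((∑ k ∈ Finset.range n, f (T^[k] x)) / (n : ℝ))
      - ((∑ k ∈ Finset.range n, f (T^[k] y)) / (n : ℝ))| ≤ L * v n := by
    intro n
    rcases Nat.eq_zero_or_pos n with rfl | hn
    · simp [hvdef]
    · have hn' : (0 : ℝ) < n := by exact_mod_cast hn
      rw [div_sub_div_same, abs_div, abs_of_nonneg (Nat.cast_nonneg n : (0:ℝ) ≤ n),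
        ← Finset.sum_sub_distrib]
      have h1 : |∑ k ∈ Finset.range n, (f (T^[k] x) - f (T^[k] y))| ≤
          ∑ k ∈ Finset.range n, L * dist (T^[k] x) (T^[k] y) :=
        (Finset.abs_sum_le_sum_abs _ _).trans (Finset.sum_le_sum fun k _ => hLip _ _)
      rw [← Finset.mul_sum] at h1
      calc |∑ k ∈ Finset.range n, (f (T^[k] x) - f (T^[k] y))| / (n : ℝ)
          ≤ (L * ∑ j ∈ Finset.range n, dist (T^[j] x) (T^[j] y)) / (n : ℝ) :=
            div_le_div_of_nonneg_right h1 hn'.le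
        _ = L * v n := by rw [hvdef, mul_div_assoc]
  have hlim : Tendsto (fun i => |((∑ k ∈ Finset.range (ns i), f (T^[k] x)) / (ns i : ℝ))
      - ((∑ k ∈ Finset.range (ns i), f (T^[k] y)) / (ns i : ℝ))|) atTop (𝓝 c0) :=
    (hx.sub hy).abs
  have hev : ∀ᶠ i in atTop, c0 / 2 ≤ |((∑ k ∈ Finset.range (ns i), f (T^[k] x)) / (ns i : ℝ))
      - ((∑ k ∈ Finset.range (ns i), f (T^[k] y)) / (ns i : ℝ))| :=
    hlim.eventually (eventually_ge_nhds (by linarith))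
  have hev2 : ∀ᶠ i in atTop, c0 / (2 * L) ≤ v (ns i) := by
    filter_upwards [hev] with i hi
    have h3 : c0 / 2 ≤ L * v (ns i) := hi.trans (hbound (ns i))
    rw [show c0 / (2 * L) = c0 / 2 / L from (div_div c0 2 L).symm, div_le_iff₀ hLpos]
    calc c0 / 2 ≤ L * v (ns i) := h3
      _ = v (ns i) * L := mul_comm _ _
  have hfreq : ∃ᶠ n in atTop, c0 / (2 * L) ≤ v n :=
    (hns.tendsto_atTop).frequently hev2.frequently
  have hlimsup : c0 / (2 * L) ≤ rhoB T x y := by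
    have hbddv : IsBoundedUnder (· ≤ ·) atTop v := isBoundedUnder_of ⟨D, fun n => hvD n⟩
    exact le_limsup_of_frequently_le hfreq hbddv
  calc c0 / (4 * L) < c0 / (2 * L) :=
        div_lt_div_of_pos_left hc0pos (by positivity) (by linarith)
    _ ≤ rhoB T x y := hlimsup
end
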